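/- Suppose that e⁺ ≺ e⁻ (strictly) for every e ∈ E and that there is a positive integer q with |sup_r(I)| = q for every ideal I of P*. Then the relation ≤ on 𝒮 is a partial order under which 𝒮 forms a distributive lattice: every two elements of 𝒮 have a least upper bound and a greatest lower bound in 𝒮, and meet distributes over join. -/

import Mathlib

set_option linter.unusedSectionVars false

/-- An ideal (downward closed subset) of the poset `P*` obtained from `P` by removing
its minimum element `⊥` and maximum element `⊤`. -/
def IsIdealStar {P : Type*} [PartialOrder P] [OrderBot P] [OrderTop P] (I : Set P) : Prop :=
  (∀ x ∈ I, x ≠ ⊥ ∧ x ≠ ⊤) ∧ ∀ u v : P, v ∈ I → u ≤ v → u ≠ ⊥ → u ∈ I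

/-- `sup_r(I) := { e ∈ E : e⁺ ∈ I ∪ {⊥} and e⁻ ∉ I ∪ {⊥} }` where `r e = (e⁺, e⁻)`. -/
def supGen {P E : Type*} [PartialOrder P] [OrderBot P] [OrderTop P]
    (r : E → P × P) (I : Set P) : Set E :=
  {e | (r e).1 ∈ I ∪ {(⊥ : P)} ∧ (r e).2 ∉ I ∪ {(⊥ : P)}}

/-- The partial order on `E`: `e ≤ e'` iff `e = e'` or `e⁻ ⪯ e'⁺`. -/
def elemLE {P E : Type*} [PartialOrder P] (r : E → P × P) (e e' : E) : Prop :=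
  e = e' ∨ (r e).2 ≤ (r e').1

/-- `S ≤ T` iff there is a bijection `π : S → T` with `e ≤ π(e)` for all `e ∈ S`. -/
def setLE {P E : Type*} [PartialOrder P] (r : E → P × P) (S T : Set E) : Prop :=
  ∃ π : E → E, Set.BijOn π S T ∧ ∀ e ∈ S, elemLE r e (π e)

/-- `J` is a least upper bound of `S` and `T` within the family `𝒮`, w.r.t. `setLE`. -/
def IsJoinIn {P E : Type*} [PartialOrder P] (r : E → P × P) (𝒮 : Set (Set E))
    (S T J : Set E) : Prop :=
  J ∈ 𝒮 ∧ setLE r S J ∧ setLE r T J ∧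
    ∀ W ∈ 𝒮, setLE r S W → setLE r T W → setLE r J W

/-- `M` is a greatest lower bound of `S` and `T` within the family `𝒮`, w.r.t. `setLE`. -/
def IsMeetIn {P E : Type*} [PartialOrder P] (r : E → P × P) (𝒮 : Set (Set E))
    (S T M : Set E) : Prop :=
  M ∈ 𝒮 ∧ setLE r M S ∧ setLE r M T ∧
    ∀ W ∈ 𝒮, setLE r W S → setLE r W T → setLE r W M

section Aux

variable {P E : Type*} [Fintype P] [PartialOrder P] [OrderBot P] [OrderTop P] [Fintype E]
  {r : E → P × P}

lemma elemLE_refl (r : E → P × P) (e : E) : elemLE r e e := Or.inl rfl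

lemma elemLE_trans (hr : ∀ e, (r e).1 < (r e).2) {e f g : E}
    (h1 : elemLE r e f) (h2 : elemLE r f g) : elemLE r e g := by
  rcases h1 with rfl | h1
  · exact h2
  rcases h2 with rfl | h2
  · exact Or.inr h1
  · exact Or.inr (h1.trans ((hr f).le.trans h2))

lemma elemLE_antisymm (hr : ∀ e, (r e).1 < (r e).2) {e f : E}
    (h1 : elemLE r e f) (h2 : elemLE r f e) : e = f := by
  rcases h1 with rfl | h1
  · rfl
  rcases h2 with rfl | h2
  · rfl
  exact absurd (((hr e).trans_le h1).trans ((hr f).trans_le h2)) (lt_irrefl _)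

lemma setLE_refl (r : E → P × P) (S : Set E) : setLE r S S :=
  ⟨id, Set.bijOn_id S, fun e _ => elemLE_refl r e⟩

lemma setLE_trans (hr : ∀ e, (r e).1 < (r e).2) {S T U : Set E}
    (h1 : setLE r S T) (h2 : setLE r T U) : setLE r S U := by
  obtain ⟨π, hπ, hle⟩ := h1
  obtain ⟨σ, hσ, hle'⟩ := h2
  exact ⟨σ ∘ π, hσ.comp hπ, fun e he =>
    elemLE_trans hr (hle e he) (hle' (π e) (hπ.mapsTo he))⟩

/-- A permutation of a finite set that is pointwise `elemLE`-increasing is the identity. -/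
lemma bijOn_fix (hr : ∀ e, (r e).1 < (r e).2) {S : Set E} {f : E → E}
    (hf : Set.BijOn f S S) (hle : ∀ e ∈ S, elemLE r e (f e)) :
    ∀ e ∈ S, f e = e := by
  intro e he
  -- iterates of f at e
  have hmem : ∀ n, f^[n] e ∈ S := by
    intro n; induction n with
    | zero => exact he
    | succ n ih => rw [Function.iterate_succ_apply']; exact hf.mapsTo ih
  have hstep : ∀ n, elemLE r (f^[n] e) (f^[n+1] e) := by
    intro n; rw [Function.iterate_succ_apply']; exact hle _ (hmem n)
  have hchain : ∀ m n, m ≤ n → elemLE r (f^[m] e) (f^[n] e) := by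
    intro m n hmn
    induction n with
    | zero => simp_all [Nat.le_zero.mp hmn]; exact elemLE_refl r e
    | succ n ih =>
      rcases Nat.lt_or_ge m (n+1) with h | h
      · exact elemLE_trans hr (ih (Nat.lt_succ_iff.mp h)) (hstep n)
      · have : m = n + 1 := le_antisymm hmn h
        subst this; exact elemLE_refl r _
  -- find a repeat
  have hfin : S.Finite := Set.toFinite S
  obtain ⟨m, n, hmn, heq⟩ :=
    Finite.exists_ne_map_eq_of_infinite (fun n : ℕ => (⟨f^[n] e, hmem n⟩ : S))
  have heq' : f^[m] e = f^[n] e := congrArg Subtype.val heq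
  clear heq
  wlog hlt : m < n generalizing m n
  · exact this n m hmn.symm heq'.symm (hmn.lt_or_gt.resolve_left hlt)
  -- cancel to get f^[n-m] e = e
  have hcancel : ∀ k a b, f^[k] a = f^[k] b → a ∈ S → b ∈ S → a = b := by
    intro k
    induction k with
    | zero => intro a b h _ _; simpa using h
    | succ k ih =>
      intro a b h ha hb
      have := ih (f a) (f b) (by
        rw [← Function.iterate_succ_apply, ← Function.iterate_succ_apply]; exact h)
        (hf.mapsTo ha) (hf.mapsTo hb)
      exact hf.injOn ha hb this
  have hper : f^[n - m] e = e := by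
    have h1 : f^[m] (f^[n-m] e) = f^[m] e := by
      rw [← Function.iterate_add_apply]
      rw [heq']
      congr 1
      omega
    exact hcancel m _ _ h1 (hmem _) he
  have hnm : 1 ≤ n - m := by omega
  have h1 : elemLE r (f^[1] e) (f^[n-m] e) := hchain 1 (n-m) hnm
  rw [hper] at h1
  have h2 : elemLE r e (f^[1] e) := by simpa using hstep 0
  have := elemLE_antisymm hr h2 h1
  simpa using this.symm

lemma setLE_antisymm (hr : ∀ e, (r e).1 < (r e).2) {S T : Set E}
    (h1 : setLE r S T) (h2 : setLE r T S) : S = T := by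
  obtain ⟨π, hπ, hle⟩ := h1
  obtain ⟨σ, hσ, hle'⟩ := h2
  have hcomp : Set.BijOn (σ ∘ π) S S := hσ.comp hπ
  have hcle : ∀ e ∈ S, elemLE r e ((σ ∘ π) e) := fun e he =>
    elemLE_trans hr (hle e he) (hle' (π e) (hπ.mapsTo he))
  have hfix := bijOn_fix hr hcomp hcle
  have hsub : S ⊆ T := by
    intro e he
    have h3 : elemLE r (π e) (σ (π e)) := hle' (π e) (hπ.mapsTo he)
    rw [show σ (π e) = e from hfix e he] at h3
    have : e = π e := elemLE_antisymm hr (hle e he) h3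
    rw [this]; exact hπ.mapsTo he
  -- symmetric
  have hcomp' : Set.BijOn (π ∘ σ) T T := hπ.comp hσ
  have hcle' : ∀ e ∈ T, elemLE r e ((π ∘ σ) e) := fun e he =>
    elemLE_trans hr (hle' e he) (hle (σ e) (hσ.mapsTo he))
  have hfix' := bijOn_fix hr hcomp' hcle'
  have hsub' : T ⊆ S := by
    intro e he
    have h3 : elemLE r (σ e) (π (σ e)) := hle (σ e) (hσ.mapsTo he)
    rw [show π (σ e) = e from hfix' e he] at h3
    have : e = σ e := elemLE_antisymm hr (hle' e he) h3
    rw [this]; exact hσ.mapsTo he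
  exact le_antisymm hsub hsub'

/-! Ideal lemmas -/

lemma ideal_union {I J : Set P} (hI : IsIdealStar I) (hJ : IsIdealStar J) :
    IsIdealStar (I ∪ J) := by
  constructor
  · rintro x (hx | hx)
    exacts [hI.1 x hx, hJ.1 x hx]
  · rintro u v (hv | hv) huv hu
    exacts [Or.inl (hI.2 u v hv huv hu), Or.inr (hJ.2 u v hv huv hu)]

lemma ideal_inter {I J : Set P} (hI : IsIdealStar I) (hJ : IsIdealStar J) :
    IsIdealStar (I ∩ J) := by
  constructor
  · rintro x ⟨hx, _⟩; exact hI.1 x hx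
  · rintro u v ⟨hv1, hv2⟩ huv hu
    exact ⟨hI.2 u v hv1 huv hu, hJ.2 u v hv2 huv hu⟩

/-- Basic facts about membership of `e⁻` in an ideal forcing `e⁺` in. -/
lemma mem_of_snd_mem {I : Set P} (hI : IsIdealStar I)
    (hr : ∀ e, (r e).1 < (r e).2) {e : E} (h : (r e).2 ∈ I ∪ {(⊥ : P)}) :
    (r e).1 ∈ I ∪ {(⊥ : P)} := by
  rcases h with h | h
  · by_cases hb : (r e).1 = ⊥
    · exact Or.inr hb
    · exact Or.inl (hI.2 _ _ h (hr e).le hb)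
  · simp only [Set.mem_singleton_iff] at h
    exact absurd (h ▸ hr e) not_lt_bot

/-- If two ideals have the same `supGen`, so do their union and intersection. -/
lemma sup_inter_of_eq {I J : Set P} (hI : IsIdealStar I) (hJ : IsIdealStar J)
    (hcardq : ∀ K : Set P, IsIdealStar K → (supGen r K).ncard = (supGen r I).ncard)
    (h : supGen r I = supGen r J) :
    supGen r (I ∩ J) = supGen r I := by
  have hsub : supGen r (I ∩ J) ⊆ supGen r I := by
    rintro e ⟨h1, h2⟩
    have h2' : (r e).2 ∉ I ∪ {(⊥ : P)} ∨ (r e).2 ∉ J ∪ {(⊥ : P)} := by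
      by_contra hc
      push_neg at hc
      rcases hc.1 with hc1 | hc1
      · rcases hc.2 with hc2 | hc2
        · exact h2 (Or.inl ⟨hc1, hc2⟩)
        · exact h2 (Or.inr hc2)
      · exact h2 (Or.inr hc1)
    have h1I : (r e).1 ∈ I ∪ {(⊥ : P)} := by
      rcases h1 with h1 | h1
      exacts [Or.inl h1.1, Or.inr h1]
    have h1J : (r e).1 ∈ J ∪ {(⊥ : P)} := by
      rcases h1 with h1 | h1
      exacts [Or.inl h1.2, Or.inr h1]
    rcases h2' with h2' | h2'
    · exact ⟨h1I, h2'⟩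
    · have : e ∈ supGen r J := ⟨h1J, h2'⟩
      rw [← h] at this; exact this
  exact Set.eq_of_subset_of_ncard_le hsub
    (by rw [hcardq (I ∩ J) (ideal_inter hI hJ)]) (Set.toFinite _)

lemma sup_union_of_eq {I J : Set P} (hI : IsIdealStar I) (hJ : IsIdealStar J)
    (hcardq : ∀ K : Set P, IsIdealStar K → (supGen r K).ncard = (supGen r I).ncard)
    (h : supGen r I = supGen r J) :
    supGen r (I ∪ J) = supGen r I := by
  have hsub : supGen r (I ∪ J) ⊆ supGen r I := by
    rintro e ⟨h1, h2⟩
    have h2I : (r e).2 ∉ I ∪ {(⊥ : P)} := fun hc => h2 (by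
      rcases hc with hc | hc; exacts [Or.inl (Or.inl hc), Or.inr hc])
    have h2J : (r e).2 ∉ J ∪ {(⊥ : P)} := fun hc => h2 (by
      rcases hc with hc | hc; exacts [Or.inl (Or.inr hc), Or.inr hc])
    rcases h1 with (h1 | h1) | h1
    · exact ⟨Or.inl h1, h2I⟩
    · have : e ∈ supGen r J := ⟨Or.inl h1, h2J⟩
      rw [← h] at this; exact this
    · exact ⟨Or.inr h1, h2I⟩
  exact Set.eq_of_subset_of_ncard_le hsub
    (by rw [hcardq (I ∪ J) (ideal_union hI hJ)]) (Set.toFinite _)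

/-! The single-element step and monotonicity. -/

lemma exists_bijOn_of_ncard_eq {D D' : Set E} (h : D.ncard = D'.ncard) :
    ∃ σ : E → E, Set.BijOn σ D D' := by
  classical
  have h' : D.toFinset.card = D'.toFinset.card := by
    rwa [← Set.ncard_eq_toFinset_card', ← Set.ncard_eq_toFinset_card']
  obtain e := Finset.equivOfCardEq h'
  refine ⟨fun x => if hx : x ∈ D then (e ⟨x, Set.mem_toFinset.mpr hx⟩ : E) else x, ?_, ?_, ?_⟩
  · intro x hx
    simp only [dif_pos hx]
    exact Set.mem_toFinset.mp (e ⟨x, Set.mem_toFinset.mpr hx⟩).2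
  · intro a ha b hb hab
    simp only [dif_pos ha, dif_pos hb] at hab
    have := e.injective (Subtype.ext hab)
    exact congrArg Subtype.val this
  · intro y hy
    refine ⟨(e.symm ⟨y, Set.mem_toFinset.mpr hy⟩ : E), Set.mem_toFinset.mp (e.symm _).2, ?_⟩
    have hm : ((e.symm ⟨y, Set.mem_toFinset.mpr hy⟩ : E)) ∈ D :=
      Set.mem_toFinset.mp (e.symm _).2
    simp only [dif_pos hm]
    have : e ⟨(e.symm ⟨y, Set.mem_toFinset.mpr hy⟩ : E), Set.mem_toFinset.mpr hm⟩
        = ⟨y, Set.mem_toFinset.mpr hy⟩ := by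
      rw [show (⟨(e.symm ⟨y, Set.mem_toFinset.mpr hy⟩ : E), Set.mem_toFinset.mpr hm⟩
          : D.toFinset) = e.symm ⟨y, Set.mem_toFinset.mpr hy⟩ from Subtype.ext rfl]
      exact e.apply_symm_apply _
    exact congrArg Subtype.val this

lemma setLE_step (hr : ∀ e, (r e).1 < (r e).2) {I : Set P} {x : P}
    (hI : IsIdealStar I) (hIx : IsIdealStar (insert x I)) (hx : x ∉ I)
    (hcard : (supGen r I).ncard = (supGen r (insert x I)).ncard) :
    setLE r (supGen r I) (supGen r (insert x I)) := by
  classical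
  set A := supGen r I with hA
  set A' := supGen r (insert x I) with hA'
  have hbot : x ≠ ⊥ := (hIx.1 x (Set.mem_insert x I)).1
  have hDs : ∀ e ∈ A \ A', (r e).2 = x := by
    rintro e ⟨⟨h1, h2⟩, h3⟩
    by_contra hne
    apply h3
    refine ⟨?_, ?_⟩
    · rcases h1 with h1 | h1
      exacts [Or.inl (Set.mem_insert_of_mem x h1), Or.inr h1]
    · rintro (h | h)
      · rcases Set.mem_insert_iff.mp h with h | h
        exacts [hne h, h2 (Or.inl h)]
      · exact h2 (Or.inr h)
  have hD's : ∀ e ∈ A' \ A, (r e).1 = x := by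
    rintro e ⟨⟨h1, h2⟩, h3⟩
    by_contra hne
    apply h3
    refine ⟨?_, ?_⟩
    · rcases h1 with h1 | h1
      · rcases Set.mem_insert_iff.mp h1 with h1 | h1
        exacts [absurd h1 hne, Or.inl h1]
      · exact Or.inr h1
    · rintro (h | h)
      · exact h2 (Or.inl (Set.mem_insert_of_mem x h))
      · exact h2 (Or.inr h)
  -- cardinalities of differences
  have hcA : (A ∩ A').ncard + (A \ A').ncard = A.ncard :=
    Set.ncard_inter_add_ncard_diff_eq_ncard A A' (Set.toFinite _)
  have hcA' : (A' ∩ A).ncard + (A' \ A).ncard = A'.ncard :=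
    Set.ncard_inter_add_ncard_diff_eq_ncard A' A (Set.toFinite _)
  have hinter : (A' ∩ A) = (A ∩ A') := Set.inter_comm _ _
  have hdiffcard : (A \ A').ncard = (A' \ A).ncard := by
    rw [hinter] at hcA'
    omega
  obtain ⟨σ, hσ⟩ := exists_bijOn_of_ncard_eq hdiffcard
  refine ⟨fun e => if e ∈ A \ A' then σ e else e, ?_, ?_⟩
  · have hbij1 : Set.BijOn (fun e => if e ∈ A \ A' then σ e else e) (A \ A') (A' \ A) := by
      refine Set.BijOn.congr hσ ?_
      intro e he; simp [he]
    have hbij2 : Set.BijOn (fun e => if e ∈ A \ A' then σ e else e) (A ∩ A') (A ∩ A') := by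
      refine Set.BijOn.congr (Set.bijOn_id _) ?_
      intro e he
      exact (if_neg (fun h : e ∈ A \ A' => h.2 he.2)).symm
    have hdisj : ∀ a ∈ (A ∩ A') ∪ (A \ A'), ∀ b ∈ (A ∩ A') ∪ (A \ A'),
        (fun e => if e ∈ A \ A' then σ e else e) a =
        (fun e => if e ∈ A \ A' then σ e else e) b → a = b := by
      rintro a (ha | ha) b (hb | hb) hab
      · exact hbij2.injOn ha hb hab
      · exfalso
        simp only [if_neg (fun h : a ∈ A \ A' => h.2 ha.2), if_pos hb] at hab
        exact (hσ.mapsTo hb).2 (hab ▸ ha.1)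
      · exfalso
        simp only [if_pos ha, if_neg (fun h : b ∈ A \ A' => h.2 hb.2)] at hab
        exact (hσ.mapsTo ha).2 (hab.symm ▸ hb.1)
      · exact hbij1.injOn ha hb hab
    have := Set.BijOn.union hbij2 hbij1 hdisj
    rwa [Set.inter_union_diff, show (A ∩ A') ∪ (A' \ A) = A' by
      rw [Set.inter_comm]; exact Set.inter_union_diff A' A] at this
  · intro e he
    by_cases hd : e ∈ A \ A'
    · simp only [if_pos hd]
      right
      rw [hDs e hd, hD's (σ e) (hσ.mapsTo hd)]
    · simp only [if_neg hd]
      exact elemLE_refl r e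

lemma setLE_mono (hr : ∀ e, (r e).1 < (r e).2)
    (hcardq : ∀ K L : Set P, IsIdealStar K → IsIdealStar L →
      (supGen r K).ncard = (supGen r L).ncard) :
    ∀ n (I J : Set P), IsIdealStar I → IsIdealStar J → I ⊆ J → (J \ I).ncard = n →
      setLE r (supGen r I) (supGen r J) := by
  intro n
  induction n with
  | zero =>
    intro I J hI hJ hsub hn
    have : J \ I = ∅ := (Set.ncard_eq_zero (Set.toFinite _)).mp hn
    have : J = I := by
      apply le_antisymm _ hsub
      intro x hx
      by_contra hc
      exact absurd (Set.mem_diff_of_mem hx hc) (by rw [this]; exact id)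
    rw [this]
    exact setLE_refl r _
  | succ n ih =>
    intro I J hI hJ hsub hn
    have hne : (J \ I).Nonempty := by
      rw [Set.nonempty_iff_ne_empty]
      intro hc
      rw [hc, Set.ncard_empty] at hn
      omega
    obtain ⟨x, hxmem, hxmin⟩ : ∃ x ∈ J \ I, ∀ u ∈ J \ I, id u ≤ id x → id x = id u := by
      obtain ⟨x, hx⟩ := (Set.toFinite (J \ I)).exists_minimal hne
      exact ⟨x, hx.prop, fun u hu hle => le_antisymm (hx.le_of_le hu hle) hle⟩
    simp only [id] at hxmin
    have hxJ : x ∈ J := hxmem.1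
    have hxI : x ∉ I := hxmem.2
    have hIx : IsIdealStar (insert x I) := by
      constructor
      · rintro y (rfl | hy)
        exacts [hJ.1 _ hxJ, hI.1 _ hy]
      · rintro u v (rfl | hv) huv hu
        · rcases eq_or_lt_of_le huv with rfl | hlt
          · exact Set.mem_insert _ _
          · right
            have huJ : u ∈ J := hJ.2 u v hxJ huv hu
            by_contra huI
            have hmem : u ∈ J \ I := ⟨huJ, huI⟩
            have := hxmin u hmem hlt.le
            exact absurd this.symm (ne_of_lt hlt)
        · exact Or.inr (hI.2 u v hv huv hu)
    have hsub' : insert x I ⊆ J := Set.insert_subset hxJ hsub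
    have hstep := setLE_step (I := I) (x := x) hr hI hIx hxI
      (hcardq I (insert x I) hI hIx)
    have hn' : (J \ insert x I).ncard = n := by
      have : J \ insert x I = (J \ I) \ {x} := by
        ext y
        simp only [Set.mem_diff, Set.mem_insert_iff, Set.mem_singleton_iff]
        tauto
      rw [this, Set.ncard_diff_singleton_of_mem hxmem, hn]
      omega
    exact setLE_trans hr hstep (ih (insert x I) J hIx hJ hsub' hn')

lemma setLE_of_subset (hr : ∀ e, (r e).1 < (r e).2)
    (hcardq : ∀ K L : Set P, IsIdealStar K → IsIdealStar L →
      (supGen r K).ncard = (supGen r L).ncard)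
    {I J : Set P} (hI : IsIdealStar I) (hJ : IsIdealStar J) (hsub : I ⊆ J) :
    setLE r (supGen r I) (supGen r J) :=
  setLE_mono hr hcardq _ I J hI hJ hsub rfl

/-- Forward lemma for unions: if `sup I ≤ sup K` then `sup (I ∪ K) = sup K`. -/
lemma sup_union_eq_of_setLE (hr : ∀ e, (r e).1 < (r e).2)
    (hcardq : ∀ K L : Set P, IsIdealStar K → IsIdealStar L →
      (supGen r K).ncard = (supGen r L).ncard)
    {I K : Set P} (hI : IsIdealStar I) (hK : IsIdealStar K)
    (h : setLE r (supGen r I) (supGen r K)) :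
    supGen r (I ∪ K) = supGen r K := by
  obtain ⟨π, hπ, hle⟩ := h
  have hsub : supGen r K ⊆ supGen r (I ∪ K) := by
    intro f hf
    obtain ⟨e, he, hef⟩ := hπ.surjOn hf
    have hf1 : (r f).1 ∈ (I ∪ K) ∪ {(⊥ : P)} := by
      rcases hf.1 with h | h
      exacts [Or.inl (Or.inr h), Or.inr h]
    refine ⟨hf1, ?_⟩
    rintro (hmem | hmem)
    · rcases hmem with hmem | hmem
      · -- (r f).2 ∈ I : derive contradiction
        rcases hle e he with heq | hlee
        · rw [heq.trans hef] at he; exact he.2 (Or.inl hmem)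
        · rw [hef] at hlee
          -- e⁻ ≤ f⁺ and f⁻ ∈ I  ⇒ f⁺ ∈ I ∪ ⊥ ⇒ e⁻ ∈ I ∪ ⊥, contradiction
          have hf1I : (r f).1 ∈ I ∪ {(⊥ : P)} :=
            mem_of_snd_mem hI hr (Or.inl hmem)
          rcases hf1I with hf1I | hf1I
          · by_cases hb : (r e).2 = ⊥
            · exact he.2 (Or.inr hb)
            · exact he.2 (Or.inl (hI.2 _ _ hf1I hlee hb))
          · simp only [Set.mem_singleton_iff] at hf1I
            rw [hf1I] at hlee
            exact he.2 (Or.inr (le_bot_iff.mp hlee))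
      · exact hf.2 (Or.inl hmem)
    · exact hf.2 (Or.inr hmem)
  exact (Set.eq_of_subset_of_ncard_le hsub
    (by rw [hcardq (I ∪ K) K (ideal_union hI hK) hK]) (Set.toFinite _)).symm

/-- Forward lemma for intersections: if `sup K ≤ sup I` then `sup (K ∩ I) = sup K`. -/
lemma sup_inter_eq_of_setLE (hr : ∀ e, (r e).1 < (r e).2)
    (hcardq : ∀ K L : Set P, IsIdealStar K → IsIdealStar L →
      (supGen r K).ncard = (supGen r L).ncard)
    {I K : Set P} (hI : IsIdealStar I) (hK : IsIdealStar K)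
    (h : setLE r (supGen r K) (supGen r I)) :
    supGen r (K ∩ I) = supGen r K := by
  obtain ⟨π, hπ, hle⟩ := h
  have hsub : supGen r K ⊆ supGen r (K ∩ I) := by
    intro f hf
    have hf2 : (r f).2 ∉ (K ∩ I) ∪ {(⊥ : P)} := by
      rintro (h | h)
      exacts [hf.2 (Or.inl h.1), hf.2 (Or.inr h)]
    refine ⟨?_, hf2⟩
    rcases hle f hf with heq | hlee
    · -- π f = f, f ∈ sup I
      have hfI : f ∈ supGen r I := heq ▸ hπ.mapsTo hf
      rcases hf.1 with h1 | h1
      · rcases hfI.1 with h2 | h2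
        · exact Or.inl ⟨h1, h2⟩
        · exact Or.inr h2
      · exact Or.inr h1
    · -- f⁻ ≤ (π f)⁺ ∈ I ∪ ⊥
      have hpf : π f ∈ supGen r I := hπ.mapsTo hf
      have hf1I : (r f).1 ∈ I ∪ {(⊥ : P)} := by
        rcases hpf.1 with h2 | h2
        · by_cases hb : (r f).1 = ⊥
          · exact Or.inr hb
          · exact Or.inl (hI.2 _ _ h2 ((hr f).le.trans hlee) hb)
        · simp only [Set.mem_singleton_iff] at h2
          rw [h2] at hlee
          have : (r f).1 < ⊥ := (hr f).trans_le hlee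
          exact absurd this (by simp)
      rcases hf.1 with h1 | h1
      · rcases hf1I with h2 | h2
        · exact Or.inl ⟨h1, h2⟩
        · exact Or.inr h2
      · exact Or.inr h1
  exact (Set.eq_of_subset_of_ncard_le hsub
    (by rw [hcardq (K ∩ I) K (ideal_inter hK hI) hK]) (Set.toFinite _)).symm

end Aux

/-- Suppose `e⁺ ≺ e⁻` strictly for every `e ∈ E` and there is a positive
integer `q` with `|sup_r(I)| = q` for every ideal `I` of `P*`. Then the relation `≤`
on `𝒮` is a partial order under which `𝒮` forms a distributive lattice: every two
elements of `𝒮` have a least upper bound and a greatest lower bound in `𝒮`, and meet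
distributes over join. -/
theorem stmt_8 {P E : Type*} [Fintype P] [PartialOrder P] [OrderBot P] [OrderTop P]
    [Fintype E] (hbt : (⊥ : P) ≠ ⊤)
    (r : E → P × P) (hr : ∀ e, (r e).1 < (r e).2)
    (q : ℕ) (hq : 0 < q)
    (hcard : ∀ I : Set P, IsIdealStar I → (supGen r I).ncard = q)
    (𝒮 : Set (Set E)) (h𝒮 : 𝒮 = {S : Set E | ∃ I : Set P, IsIdealStar I ∧ S = supGen r I}) :
    -- `≤` is a partial order on `𝒮`:
    (∀ S ∈ 𝒮, setLE r S S) ∧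
    (∀ S ∈ 𝒮, ∀ T ∈ 𝒮, setLE r S T → setLE r T S → S = T) ∧
    (∀ S ∈ 𝒮, ∀ T ∈ 𝒮, ∀ W ∈ 𝒮, setLE r S T → setLE r T W → setLE r S W) ∧
    -- every two elements of `𝒮` have a least upper bound and a greatest lower bound in `𝒮`:
    (∀ S ∈ 𝒮, ∀ T ∈ 𝒮, ∃ J, IsJoinIn r 𝒮 S T J) ∧
    (∀ S ∈ 𝒮, ∀ T ∈ 𝒮, ∃ M, IsMeetIn r 𝒮 S T M) ∧
    -- meet distributes over join: `S ∧ (T ∨ W) = (S ∧ T) ∨ (S ∧ W)`: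
    (∀ S ∈ 𝒮, ∀ T ∈ 𝒮, ∀ W ∈ 𝒮, ∀ J M₁ M₂ M₃ J' : Set E,
      IsJoinIn r 𝒮 T W J → IsMeetIn r 𝒮 S J M₁ →
      IsMeetIn r 𝒮 S T M₂ → IsMeetIn r 𝒮 S W M₃ →
      IsJoinIn r 𝒮 M₂ M₃ J' → M₁ = J') := by
  have hcardq : ∀ K L : Set P, IsIdealStar K → IsIdealStar L →
      (supGen r K).ncard = (supGen r L).ncard := by
    intro K L hK hL; rw [hcard K hK, hcard L hL]
  subst h𝒮
  -- canonical join
  have hjoin : ∀ (I J : Set P), IsIdealStar I → IsIdealStar J →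
      IsJoinIn r {S : Set E | ∃ I : Set P, IsIdealStar I ∧ S = supGen r I} (supGen r I) (supGen r J) (supGen r (I ∪ J)) := by
    intro I J hI hJ
    refine ⟨⟨I ∪ J, ideal_union hI hJ, rfl⟩, ?_, ?_, ?_⟩
    · exact setLE_of_subset hr hcardq hI (ideal_union hI hJ) Set.subset_union_left
    · exact setLE_of_subset hr hcardq hJ (ideal_union hI hJ) Set.subset_union_right
    · rintro W ⟨K, hK, rfl⟩ hSW hTW
      have h1 := sup_union_eq_of_setLE hr hcardq hI hK hSW
      have h2 := sup_union_eq_of_setLE hr hcardq hJ hK hTW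
      have h3 : supGen r ((I ∪ K) ∪ (J ∪ K)) = supGen r (I ∪ K) :=
        sup_union_of_eq (ideal_union hI hK) (ideal_union hJ hK)
          (fun L hL => hcardq L (I ∪ K) hL (ideal_union hI hK)) (h1.trans h2.symm)
      have heq : (I ∪ K) ∪ (J ∪ K) = (I ∪ J) ∪ K := by
        ext y; simp only [Set.mem_union]; tauto
      rw [heq, h1] at h3
      rw [← h3]
      exact setLE_of_subset hr hcardq (ideal_union hI hJ)
        (ideal_union (ideal_union hI hJ) hK) Set.subset_union_left
  -- canonical meet
  have hmeet : ∀ (I J : Set P), IsIdealStar I → IsIdealStar J →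
      IsMeetIn r {S : Set E | ∃ I : Set P, IsIdealStar I ∧ S = supGen r I} (supGen r I) (supGen r J) (supGen r (I ∩ J)) := by
    intro I J hI hJ
    refine ⟨⟨I ∩ J, ideal_inter hI hJ, rfl⟩, ?_, ?_, ?_⟩
    · exact setLE_of_subset hr hcardq (ideal_inter hI hJ) hI Set.inter_subset_left
    · exact setLE_of_subset hr hcardq (ideal_inter hI hJ) hJ Set.inter_subset_right
    · rintro W ⟨K, hK, rfl⟩ hWS hWT
      have h1 := sup_inter_eq_of_setLE hr hcardq hI hK hWS
      have h2 := sup_inter_eq_of_setLE hr hcardq hJ hK hWT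
      have h3 : supGen r ((K ∩ I) ∩ (K ∩ J)) = supGen r (K ∩ I) :=
        sup_inter_of_eq (ideal_inter hK hI) (ideal_inter hK hJ)
          (fun L hL => hcardq L (K ∩ I) hL (ideal_inter hK hI)) (h1.trans h2.symm)
      have heq : (K ∩ I) ∩ (K ∩ J) = K ∩ (I ∩ J) := by
        ext y; simp only [Set.mem_inter_iff]; tauto
      rw [heq, h1] at h3
      rw [← h3]
      exact setLE_of_subset hr hcardq (ideal_inter hK (ideal_inter hI hJ))
        (ideal_inter hI hJ) Set.inter_subset_right
  have hjoin_unique : ∀ S T J J' : Set E,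
      IsJoinIn r {S : Set E | ∃ I : Set P, IsIdealStar I ∧ S = supGen r I} S T J → IsJoinIn r {S : Set E | ∃ I : Set P, IsIdealStar I ∧ S = supGen r I} S T J' → J = J' := by
    intro S T J J' h1 h2
    exact setLE_antisymm hr
      (h1.2.2.2 J' h2.1 h2.2.1 h2.2.2.1)
      (h2.2.2.2 J h1.1 h1.2.1 h1.2.2.1)
  have hmeet_unique : ∀ S T M M' : Set E,
      IsMeetIn r {S : Set E | ∃ I : Set P, IsIdealStar I ∧ S = supGen r I} S T M → IsMeetIn r {S : Set E | ∃ I : Set P, IsIdealStar I ∧ S = supGen r I} S T M' → M = M' := by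
    intro S T M M' h1 h2
    exact setLE_antisymm hr
      (h2.2.2.2 M h1.1 h1.2.1 h1.2.2.1)
      (h1.2.2.2 M' h2.1 h2.2.1 h2.2.2.1)
  refine ⟨fun S _ => setLE_refl r S,
    fun S _ T _ h1 h2 => setLE_antisymm hr h1 h2,
    fun S _ T _ W _ h1 h2 => setLE_trans hr h1 h2,
    ?_, ?_, ?_⟩
  · rintro S ⟨I, hI, rfl⟩ T ⟨J, hJ, rfl⟩
    exact ⟨_, hjoin I J hI hJ⟩
  · rintro S ⟨I, hI, rfl⟩ T ⟨J, hJ, rfl⟩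
    exact ⟨_, hmeet I J hI hJ⟩
  · rintro S ⟨A, hA, rfl⟩ T ⟨B, hB, rfl⟩ W ⟨C, hC, rfl⟩ J M₁ M₂ M₃ J' hJJ hM₁ hM₂ hM₃ hJ'
    have hBC := ideal_union hB hC
    have hJeq : J = supGen r (B ∪ C) := hjoin_unique _ _ _ _ hJJ (hjoin B C hB hC)
    rw [hJeq] at hM₁
    have hM₁eq : M₁ = supGen r (A ∩ (B ∪ C)) :=
      hmeet_unique _ _ _ _ hM₁ (hmeet A (B ∪ C) hA hBC)
    have hM₂eq : M₂ = supGen r (A ∩ B) := hmeet_unique _ _ _ _ hM₂ (hmeet A B hA hB)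
    have hM₃eq : M₃ = supGen r (A ∩ C) := hmeet_unique _ _ _ _ hM₃ (hmeet A C hA hC)
    rw [hM₂eq, hM₃eq] at hJ'
    have hJ'eq : J' = supGen r ((A ∩ B) ∪ (A ∩ C)) :=
      hjoin_unique _ _ _ _ hJ' (hjoin (A ∩ B) (A ∩ C) (ideal_inter hA hB) (ideal_inter hA hC))
    rw [hM₁eq, hJ'eq, Set.inter_union_distrib_left]
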